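/- Laplace mechanism supermartingale: let X_1, X_2, ... be [0,1]-valued with conditional mean μ* given the past, let L_t be conditionally mean-zero Laplace with scale 1/ε_t, conditionally independent of X_t, and set Z_t = X_t + L_t. Then for predictable λ_t ∈ [0, ε_t), M_t := ∏_{i=1}^t exp{ λ_i (Z_i − μ*) − λ_i²/8 − ψ_i(λ_i) } with ψ_i(λ) := −log(1 − λ²/ε_i²) is a nonnegative supermartingale starting at one. -/

import Mathlib

open MeasureTheory ProbabilityTheory Finset
open Real

lemma lap_u_pos {p : ℝ} (hp0 : 0 ≤ p) (hp1 : p ≤ 1) (c : ℝ) :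
    0 < 1 - p + p * Real.exp c := by
  rcases eq_or_lt_of_le hp1 with h | h
  · subst h; simpa using Real.exp_pos c
  · have : 0 ≤ p * Real.exp c := mul_nonneg hp0 (Real.exp_pos c).le
    linarith

lemma lap_bern_hoeffding {p c : ℝ} (hp0 : 0 ≤ p) (hp1 : p ≤ 1) (hc : 0 ≤ c) :
    1 - p + p * Real.exp c ≤ Real.exp (c * p + c ^ 2 / 8) := by
  set u : ℝ → ℝ := fun x => 1 - p + p * Real.exp x with hu
  have hupos : ∀ x, 0 < u x := fun x => lap_u_pos hp0 hp1 x
  set f : ℝ → ℝ := fun x => x * p + x ^ 2 / 8 - Real.log (u x) with hf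
  set g : ℝ → ℝ := fun x => p + x / 4 - p * Real.exp x / u x with hg
  have hud : ∀ x, HasDerivAt u (p * Real.exp x) x := by
    intro x
    exact ((Real.hasDerivAt_exp x).const_mul p).const_add (1 - p)
  have hfd : ∀ x, HasDerivAt f (g x) x := by
    intro x
    have h1 : HasDerivAt (fun x : ℝ => x * p + x ^ 2 / 8) (p + x / 4) x := by
      have := ((hasDerivAt_id x).mul_const p).add
        (((hasDerivAt_pow 2 x)).div_const 8)
      exact this.congr_deriv (by ring)
    have h2 : HasDerivAt (fun x => Real.log (u x)) (p * Real.exp x / u x) x :=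
      (hud x).log (hupos x).ne'
    exact h1.sub h2
  have hgd : ∀ x, HasDerivAt g (1/4 - (p * Real.exp x * (1 - p)) / (u x) ^ 2) x := by
    intro x
    have h1 : HasDerivAt (fun x : ℝ => p + x / 4) (1/4) x := by
      simpa using ((hasDerivAt_id x).div_const 4).const_add p
    have h2 : HasDerivAt (fun x => p * Real.exp x / u x)
        ((p * Real.exp x * u x - p * Real.exp x * (p * Real.exp x)) / (u x) ^ 2) x :=
      ((Real.hasDerivAt_exp x).const_mul p).div (hud x) (hupos x).ne'
    have := h1.sub h2
    refine this.congr_deriv ?_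
    have h3 : u x = 1 - p + p * Real.exp x := rfl
    rw [h3]
    ring
  have hg_nonneg : ∀ x, 0 ≤ 1/4 - (p * Real.exp x * (1 - p)) / (u x) ^ 2 := by
    intro x
    have hsq : (p * Real.exp x) * (1 - p) ≤ (u x) ^ 2 / 4 := by
      nlinarith [sq_nonneg (1 - p - p * Real.exp x), hupos x]
    have h4 : (p * Real.exp x * (1 - p)) / (u x) ^ 2 ≤ 1/4 := by
      rw [div_le_iff₀ (pow_pos (hupos x) 2)]
      nlinarith [hsq]
    linarith
  -- g is monotone, g 0 = 0, hence g ≥ 0 on [0, ∞)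
  have hg0 : g 0 = 0 := by
    have h3 : u 0 = 1 := by simp [hu]
    simp [hg, h3]
  have hgmono : MonotoneOn g (Set.Ici (0:ℝ)) := by
    apply monotoneOn_of_deriv_nonneg (convex_Ici 0)
      (Continuous.continuousOn (continuous_iff_continuousAt.2
        fun x => (hgd x).differentiableAt.continuousAt))
    · intro x _
      exact ((hgd x).differentiableAt).differentiableWithinAt
    · intro x hx
      rw [(hgd x).deriv]
      exact hg_nonneg x
  have hgnn : ∀ x ∈ Set.Ici (0:ℝ), 0 ≤ g x := by
    intro x hx
    have := hgmono (Set.self_mem_Ici) hx hx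
    rwa [hg0] at this
  have hfmono : MonotoneOn f (Set.Ici (0:ℝ)) := by
    apply monotoneOn_of_deriv_nonneg (convex_Ici 0)
      (Continuous.continuousOn (continuous_iff_continuousAt.2
        fun x => (hfd x).differentiableAt.continuousAt))
    · intro x _
      exact ((hfd x).differentiableAt).differentiableWithinAt
    · intro x hx
      rw [(hfd x).deriv]
      exact hgnn x (le_of_lt (by simpa using hx))
  have hf0 : f 0 = 0 := by
    have h3 : u 0 = 1 := by simp [hu]
    simp [hf, h3]
  have hfc : 0 ≤ f c := by
    have := hfmono (Set.self_mem_Ici) hc hc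
    rwa [hf0] at this
  have : Real.log (u c) ≤ c * p + c ^ 2 / 8 := by
    simp only [hf] at hfc; linarith
  calc u c = Real.exp (Real.log (u c)) := (Real.exp_log (hupos c)).symm
  _ ≤ Real.exp (c * p + c ^ 2 / 8) := Real.exp_le_exp.2 this

lemma lap_exp_convex {c q y : ℝ} (hc : 0 ≤ c) (hcq : c ≤ q) (hq : 0 < q) :
    Real.exp (c * y) ≤ (1 - c / q) + (c / q) * Real.exp (q * y) := by
  have ha0 : (0:ℝ) ≤ 1 - c / q := by
    have : c / q ≤ 1 := (div_le_one hq).2 hcq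
    linarith
  have hb0 : (0:ℝ) ≤ c / q := by positivity
  have hab : (1 - c / q) + c / q = 1 := by ring
  have h := (convexOn_exp).2 (Set.mem_univ (0:ℝ)) (Set.mem_univ (q * y)) ha0 hb0 hab
  simp only [smul_eq_mul, mul_zero, zero_add, Real.exp_zero, mul_one] at h
  have harg : c / q * (q * y) = c * y := by
    field_simp
  rw [harg] at h
  linarith [h]

section kernelHelpers

variable {Ω : Type*} {m : MeasurableSpace Ω} [m0 : MeasurableSpace Ω] [StandardBorelSpace Ω]
  {μ : Measure Ω} [IsProbabilityMeasure μ]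

lemma lap_ae_kernel (hm : m ≤ m0) {P : Ω → Prop} (hP : ∀ᵐ y ∂μ, P y) :
    ∀ᵐ ω ∂μ, ∀ᵐ y ∂(condExpKernel μ m ω), P y := by
  set N := toMeasurable μ {y | ¬ P y} with hN
  have hμN : μ N = 0 := by
    rw [hN, measure_toMeasurable]
    exact hP
  have hNmeas : MeasurableSet N := measurableSet_toMeasurable _ _
  have h1 : (fun ω => (condExpKernel μ m ω N).toReal) =ᵐ[μ] μ⟦N|m⟧ :=
    condExpKernel_ae_eq_condExp hm hNmeas
  have h2 : μ⟦N|m⟧ =ᵐ[μ] 0 := by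
    have hind : N.indicator (fun _ => (1:ℝ)) =ᵐ[μ] 0 := by
      have h0 : ∀ᵐ y ∂μ, y ∉ N := by
        rw [ae_iff]; simpa using hμN
      filter_upwards [h0] with y hy
      simp [Set.indicator_of_notMem hy]
    calc μ⟦N|m⟧ =ᵐ[μ] μ[(0 : Ω → ℝ)|m] := condExp_congr_ae hind
    _ = 0 := condExp_zero
  filter_upwards [h1.trans h2] with ω hω
  have hκ : condExpKernel μ m ω N = 0 := by
    have hne : condExpKernel μ m ω N ≠ ⊤ := measure_ne_top _ _
    simp only [Pi.zero_apply] at hω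
    rcases (ENNReal.toReal_eq_zero_iff _).1 hω with h | h
    · exact h
    · exact absurd h hne
  rw [ae_iff]
  exact measure_mono_null (fun y hy => subset_toMeasurable _ _ hy) hκ

lemma lap_kernel_const (hm : m ≤ m0) {f : Ω → ℝ} (hf : Measurable[m] f) :
    ∀ᵐ ω ∂μ, ∀ᵐ y ∂(condExpKernel μ m ω), f y = f ω := by
  have key : ∀ p : ℚ × ℚ, ∀ᵐ ω ∂μ,
      (condExpKernel μ m ω (f ⁻¹' (Set.Ioo (p.1:ℝ) (p.2:ℝ)))).toReal
        = (f ⁻¹' (Set.Ioo (p.1:ℝ) (p.2:ℝ))).indicator (fun _ => (1:ℝ)) ω := by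
    intro p
    set s := f ⁻¹' (Set.Ioo (p.1:ℝ) (p.2:ℝ)) with hs
    have hsm : MeasurableSet[m] s := hf measurableSet_Ioo
    have hs0 : MeasurableSet s := hm _ hsm
    have h1 : (fun ω => (condExpKernel μ m ω s).toReal) =ᵐ[μ] μ⟦s|m⟧ :=
      condExpKernel_ae_eq_condExp hm hs0
    have h2 : μ⟦s|m⟧ = s.indicator (fun _ => (1:ℝ)) :=
      condExp_of_stronglyMeasurable hm
        (stronglyMeasurable_const.indicator hsm) ((integrable_const 1).indicator hs0)
    filter_upwards [h1] with ω hω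
    rw [hω, h2]
  filter_upwards [ae_all_iff.2 key] with ω hω
  rw [ae_iff]
  refine measure_mono_null (fun y hy => ?_)
    (measure_iUnion_null (ι := ℚ × ℚ) (s := fun p =>
      if f ω ∈ Set.Ioo (p.1:ℝ) (p.2:ℝ) then ∅
      else f ⁻¹' (Set.Ioo (p.1:ℝ) (p.2:ℝ))) ?_)
  · -- y with f y ≠ f ω lies in some piece
    simp only [Set.mem_setOf_eq] at hy
    rcases lt_or_gt_of_ne hy with hlt | hgt
    · obtain ⟨b, hb1, hb2⟩ := exists_rat_btwn hlt
      obtain ⟨a, ha⟩ := exists_rat_lt (f y)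
      refine Set.mem_iUnion.2 ⟨(a, b), ?_⟩
      rw [if_neg (by simp only [Set.mem_Ioo]; push_neg; intro _; exact hb2.le)]
      exact Set.mem_preimage.2 ⟨ha, hb1⟩
    · obtain ⟨a, ha1, ha2⟩ := exists_rat_btwn hgt
      obtain ⟨b, hb⟩ := exists_rat_gt (f y)
      refine Set.mem_iUnion.2 ⟨(a, b), ?_⟩
      rw [if_neg (by simp only [Set.mem_Ioo]; push_neg; intro h; exact absurd ha1 (not_lt.2 h.le))]
      · exact Set.mem_preimage.2 ⟨ha2, hb⟩
  · intro p
    by_cases hp : f ω ∈ Set.Ioo (p.1:ℝ) (p.2:ℝ)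
    · simp [hp]
    · simp only [if_neg hp]
      have := hω p
      rw [Set.indicator_of_notMem (by exact hp)] at this
      have hne : condExpKernel μ m ω (f ⁻¹' (Set.Ioo (p.1:ℝ) (p.2:ℝ))) ≠ ⊤ := measure_ne_top _ _
      rcases (ENNReal.toReal_eq_zero_iff _).1 this with h | h
      · exact h
      · exact absurd h hne

lemma lap_condIndep (hm : m ≤ m0) {X L X' L' : Ω → ℝ} (hX' : Measurable X') (hL' : Measurable L')
    (hXe : X =ᵐ[μ] X') (hLe : L =ᵐ[μ] L') (hci : CondIndepFun m hm X L μ) :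
    ∀ᵐ ω ∂μ, IndepFun X' L' (condExpKernel μ m ω) := by
  have hraw : ∀ p : ℚ × ℚ, ∀ᵐ ω ∂μ,
      condExpKernel μ m ω (X ⁻¹' Set.Iio (p.1:ℝ) ∩ L ⁻¹' Set.Iio (p.2:ℝ))
        = condExpKernel μ m ω (X ⁻¹' Set.Iio (p.1:ℝ))
          * condExpKernel μ m ω (L ⁻¹' Set.Iio (p.2:ℝ)) := by
    intro p
    exact ae_of_ae_trim hm
      (hci (X ⁻¹' Set.Iio (p.1:ℝ)) (L ⁻¹' Set.Iio (p.2:ℝ))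
        ⟨Set.Iio (p.1:ℝ), measurableSet_Iio, rfl⟩ ⟨Set.Iio (p.2:ℝ), measurableSet_Iio, rfl⟩)
  have htrans : ∀ᵐ ω ∂μ, ∀ᵐ y ∂(condExpKernel μ m ω), X y = X' y ∧ L y = L' y :=
    lap_ae_kernel hm (hXe.and hLe)
  filter_upwards [ae_all_iff.2 hraw, htrans] with ω hω hyt
  -- sets agree κω-a.e.
  have hsetX : ∀ s : Set ℝ, (X' ⁻¹' s : Set Ω) =ᵐ[condExpKernel μ m ω] (X ⁻¹' s : Set Ω) := by
    intro s
    filter_upwards [hyt] with y hy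
    show (X' y ∈ s) = (X y ∈ s)
    rw [hy.1]
  have hsetL : ∀ s : Set ℝ, (L' ⁻¹' s : Set Ω) =ᵐ[condExpKernel μ m ω] (L ⁻¹' s : Set Ω) := by
    intro s
    filter_upwards [hyt] with y hy
    show (L' y ∈ s) = (L y ∈ s)
    rw [hy.2]
  have hω' : ∀ q1 q2 : ℚ,
      condExpKernel μ m ω (X' ⁻¹' Set.Iio (q1:ℝ) ∩ L' ⁻¹' Set.Iio (q2:ℝ))
        = condExpKernel μ m ω (X' ⁻¹' Set.Iio (q1:ℝ))
          * condExpKernel μ m ω (L' ⁻¹' Set.Iio (q2:ℝ)) := by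
    intro q1 q2
    rw [measure_congr ((hsetX _).inter (hsetL _)), measure_congr (hsetX _),
      measure_congr (hsetL _)]
    exact hω (q1, q2)
  -- π-system argument
  have hgen : ∀ f : Ω → ℝ, Measurable f → MeasurableSpace.comap f (inferInstance : MeasurableSpace ℝ)
      = MeasurableSpace.generateFrom ((Set.preimage f) '' (⋃ a : ℚ, {Set.Iio (a:ℝ)})) := by
    intro f hf
    rw [show (inferInstance : MeasurableSpace ℝ) = borel ℝ from BorelSpace.measurable_eq,
      borel_eq_generateFrom_Iio_rat, MeasurableSpace.comap_generateFrom]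
  have hpi : ∀ f : Ω → ℝ, IsPiSystem ((Set.preimage f) '' (⋃ a : ℚ, {Set.Iio (a:ℝ)})) := by
    intro f
    rintro _ ⟨s1, hs1, rfl⟩ _ ⟨s2, hs2, rfl⟩ _
    simp only [Set.mem_iUnion, Set.mem_singleton_iff] at hs1 hs2
    obtain ⟨a, rfl⟩ := hs1
    obtain ⟨b, rfl⟩ := hs2
    refine ⟨Set.Iio ((min a b : ℚ) : ℝ), ?_, ?_⟩
    · simp only [Set.mem_iUnion, Set.mem_singleton_iff]
      exact ⟨min a b, rfl⟩
    · rw [← Set.preimage_inter, Set.Iio_inter_Iio, ← Rat.cast_min]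
  have hsets : IndepSets ((Set.preimage X') '' (⋃ a : ℚ, {Set.Iio (a:ℝ)}))
      ((Set.preimage L') '' (⋃ a : ℚ, {Set.Iio (a:ℝ)})) (condExpKernel μ m ω) := by
    rintro _ _ ⟨s1, hs1, rfl⟩ ⟨s2, hs2, rfl⟩
    simp only [Set.mem_iUnion, Set.mem_singleton_iff] at hs1 hs2
    obtain ⟨a, rfl⟩ := hs1
    obtain ⟨b, rfl⟩ := hs2
    exact Filter.Eventually.of_forall fun _ => hω' a b
  exact IndepSets.indep (Measurable.comap_le hX') (Measurable.comap_le hL')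
    (hpi X') (hpi L') (hgen X' hX') (hgen L' hL') hsets

lemma lap_mgf_bound {ν : Measure Ω} [IsProbabilityMeasure ν] {L : Ω → ℝ} (hL : Measurable L)
    {c ε : ℝ} (hc0 : 0 ≤ c) (hcε : c < ε) (hε : 0 < ε)
    (hq : ∀ q : ℚ, 0 < (q:ℝ) → (q:ℝ) < ε →
      ∫⁻ y, ENNReal.ofReal (Real.exp (q * L y)) ∂ν
        = ENNReal.ofReal (1 / (1 - (q:ℝ)^2 / ε^2))) :
    ENNReal.ofReal (1 - c^2/ε^2) * ∫⁻ y, ENNReal.ofReal (Real.exp (c * L y)) ∂ν ≤ 1 := by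
  have hεne : (ε:ℝ) ≠ 0 := hε.ne'
  rcases eq_or_lt_of_le hc0 with hc | hc
  · subst hc
    simp only [zero_mul, Real.exp_zero, ENNReal.ofReal_one, lintegral_one, measure_univ, mul_one]
    simp [ENNReal.ofReal_le_one]
  -- c > 0
  set A := ∫⁻ y, ENNReal.ofReal (Real.exp (c * L y)) ∂ν with hA
  have hb : ∀ q : ℚ, c < (q:ℝ) → (q:ℝ) < ε →
      A ≤ ENNReal.ofReal ((1 - c / q) + (c / q) * (1 / (1 - (q:ℝ)^2 / ε^2))) := by
    intro q hcq hqε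
    have hq0 : (0:ℝ) < q := lt_trans hc hcq
    have hden : (0:ℝ) < 1 - (q:ℝ)^2 / ε^2 := by
      have h1 : (q:ℝ)^2 < ε^2 := by nlinarith
      have : (q:ℝ)^2 / ε^2 < 1 := (div_lt_one (by positivity)).2 h1
      linarith
    have hstep : A ≤ ENNReal.ofReal (1 - c / q)
        + ENNReal.ofReal (c / q) * ∫⁻ y, ENNReal.ofReal (Real.exp ((q:ℝ) * L y)) ∂ν := by
      have hmono : A ≤ ∫⁻ y, (ENNReal.ofReal (1 - c / q)
          + ENNReal.ofReal (c / q) * ENNReal.ofReal (Real.exp ((q:ℝ) * L y))) ∂ν := by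
        apply lintegral_mono
        intro y
        calc ENNReal.ofReal (Real.exp (c * L y))
            ≤ ENNReal.ofReal ((1 - c / q) + (c / q) * Real.exp ((q:ℝ) * L y)) :=
              ENNReal.ofReal_le_ofReal (lap_exp_convex hc0 hcq.le hq0)
        _ = ENNReal.ofReal (1 - c / q) + ENNReal.ofReal ((c / q) * Real.exp ((q:ℝ) * L y)) := by
              rw [ENNReal.ofReal_add (by
                have : c / q ≤ 1 := (div_le_one hq0).2 hcq.le
                linarith) (by positivity)]
        _ = ENNReal.ofReal (1 - c / q)
              + ENNReal.ofReal (c / q) * ENNReal.ofReal (Real.exp ((q:ℝ) * L y)) := by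
              rw [ENNReal.ofReal_mul (by positivity)]
      calc A ≤ _ := hmono
      _ = ENNReal.ofReal (1 - c / q)
          + ENNReal.ofReal (c / q) * ∫⁻ y, ENNReal.ofReal (Real.exp ((q:ℝ) * L y)) ∂ν := by
          rw [lintegral_add_left measurable_const, lintegral_const, measure_univ, mul_one,
            lintegral_const_mul]
          exact (ENNReal.measurable_ofReal.comp (Real.measurable_exp.comp (hL.const_mul _)))
    rw [hq q hq0 hqε] at hstep
    calc A ≤ _ := hstep
    _ = ENNReal.ofReal ((1 - c / q) + (c / q) * (1 / (1 - (q:ℝ)^2 / ε^2))) := by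
        rw [← ENNReal.ofReal_mul (by positivity), ← ENNReal.ofReal_add (by
          have : c / q ≤ 1 := (div_le_one hq0).2 hcq.le
          linarith) (by positivity)]
  -- A is finite
  obtain ⟨q0, hq01, hq02⟩ := exists_rat_btwn hcε
  have hAne : A ≠ ⊤ := by
    exact ne_top_of_le_ne_top ENNReal.ofReal_ne_top (hb q0 hq01 hq02)
  set a := A.toReal with ha
  have hA_eq : A = ENNReal.ofReal a := (ENNReal.ofReal_toReal hAne).symm
  have ha0 : 0 ≤ a := ENNReal.toReal_nonneg
  have hbr : ∀ q : ℚ, c < (q:ℝ) → (q:ℝ) < ε →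
      a ≤ (1 - c / q) + (c / q) * (1 / (1 - (q:ℝ)^2 / ε^2)) := by
    intro q hcq hqε
    have hq0 : (0:ℝ) < q := lt_trans hc hcq
    have hden : (0:ℝ) < 1 - (q:ℝ)^2 / ε^2 := by
      have h1 : (q:ℝ)^2 < ε^2 := by nlinarith
      have : (q:ℝ)^2 / ε^2 < 1 := (div_lt_one (by positivity)).2 h1
      linarith
    refine ENNReal.toReal_le_of_le_ofReal ?_ (hb q hcq hqε)
    have h1 : c / q ≤ 1 := (div_le_one hq0).2 hcq.le
    have h2 : (0:ℝ) ≤ (c / q) * (1 / (1 - (q:ℝ)^2 / ε^2)) := by positivity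
    linarith
  -- the real inequality
  have hkey : (1 - c^2/ε^2) * a ≤ 1 := by
    have hden_c : (0:ℝ) < ε^2 - c^2 := by nlinarith
    refine le_of_forall_pos_le_add ?_
    intro δ hδ
    set F : ℝ → ℝ := fun x => (1 - c^2/ε^2) * (1 + c * x / (ε^2 - x^2)) with hF
    have hFc : F c = 1 := by
      rw [hF]
      field_simp
      ring
    have hFcont : ContinuousAt F c := by
      apply ContinuousAt.mul continuousAt_const
      apply ContinuousAt.add continuousAt_const
      exact ContinuousAt.div ((continuous_const.mul continuous_id).continuousAt)
        ((continuous_const.sub (continuous_pow 2)).continuousAt) hden_c.ne'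
    rw [Metric.continuousAt_iff] at hFcont
    obtain ⟨η, hη, hball⟩ := hFcont δ hδ
    obtain ⟨q, hq1, hq2⟩ := exists_rat_btwn (show c < min ε (c + η) by
      simp only [lt_min_iff]
      exact ⟨hcε, by linarith⟩)
    have hq2a : (q:ℝ) < ε := lt_of_lt_of_le hq2 (min_le_left _ _)
    have hq2b : (q:ℝ) < c + η := lt_of_lt_of_le hq2 (min_le_right _ _)
    have hq0 : (0:ℝ) < q := lt_trans hc hq1
    have hden : (0:ℝ) < 1 - (q:ℝ)^2 / ε^2 := by
      have h1 : (q:ℝ)^2 < ε^2 := by nlinarith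
      have : (q:ℝ)^2 / ε^2 < 1 := (div_lt_one (by positivity)).2 h1
      linarith
    have hdist : dist (q:ℝ) c < η := by
      rw [Real.dist_eq, abs_of_pos (by linarith)]
      linarith
    have hFq := hball hdist
    rw [hFc, Real.dist_eq] at hFq
    have hFq' : F q < 1 + δ := by
      have := abs_lt.1 hFq
      linarith [this.1, this.2]
    have halg : (1 - c^2/ε^2) * ((1 - c / q) + (c / q) * (1 / (1 - (q:ℝ)^2 / ε^2))) = F q := by
      rw [hF]
      have hd2 : (0:ℝ) < ε^2 - (q:ℝ)^2 := by nlinarith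
      have : (1 - c / q) + (c / q) * (1 / (1 - (q:ℝ)^2 / ε^2)) = 1 + c * q / (ε^2 - q^2) := by
        field_simp
        ring
      rw [this]
    have hmul : (1 - c^2/ε^2) * a
        ≤ (1 - c^2/ε^2) * ((1 - c / q) + (c / q) * (1 / (1 - (q:ℝ)^2 / ε^2))) := by
      apply mul_le_mul_of_nonneg_left (hbr q hq1 hq2a)
      have h1 : c^2 < ε^2 := by nlinarith
      have : c^2 / ε^2 < 1 := (div_lt_one (by positivity)).2 h1
      linarith
    linarith [hmul, halg ▸ hFq'.le]
  have hnn : (0:ℝ) ≤ 1 - c^2/ε^2 := by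
    have h1 : c^2 < ε^2 := by nlinarith
    have : c^2/ε^2 < 1 := (div_lt_one (by positivity)).2 h1
    linarith
  rw [hA_eq, ← ENNReal.ofReal_mul hnn]
  exact le_trans (ENNReal.ofReal_le_ofReal hkey) (le_of_eq ENNReal.ofReal_one)

lemma lap_x_bound {ν : Measure Ω} [IsProbabilityMeasure ν] {X : Ω → ℝ} {μstar : ℝ}
    (hXi : Integrable X ν) (hXb : ∀ᵐ y ∂ν, X y ∈ Set.Icc (0:ℝ) 1)
    (hXmean : ∫ y, X y ∂ν = μstar) {c : ℝ} (hc : 0 ≤ c)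
    (hμ0 : 0 ≤ μstar) (hμ1 : μstar ≤ 1) :
    ∫⁻ y, ENNReal.ofReal (Real.exp (c * X y)) ∂ν
      ≤ ENNReal.ofReal (Real.exp (c * μstar + c^2/8)) := by
  have hpt : ∀ᵐ y ∂ν, Real.exp (c * X y) ≤ (1 - X y) + X y * Real.exp c := by
    filter_upwards [hXb] with y hy
    have ha0 : (0:ℝ) ≤ 1 - X y := by linarith [hy.2]
    have hb0 : (0:ℝ) ≤ X y := hy.1
    have hab : (1 - X y) + X y = 1 := by ring
    have h := (convexOn_exp).2 (Set.mem_univ (0:ℝ)) (Set.mem_univ c) ha0 hb0 hab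
    simp only [smul_eq_mul, mul_zero, zero_add, Real.exp_zero, mul_one] at h
    have : X y * c = c * X y := by ring
    rw [this] at h
    linarith
  have hint : Integrable (fun y => (1 - X y) + X y * Real.exp c) ν :=
    ((integrable_const 1).sub hXi).add (hXi.mul_const _)
  calc ∫⁻ y, ENNReal.ofReal (Real.exp (c * X y)) ∂ν
      ≤ ∫⁻ y, ENNReal.ofReal ((1 - X y) + X y * Real.exp c) ∂ν := by
        apply lintegral_mono_ae
        filter_upwards [hpt] with y hy
        exact ENNReal.ofReal_le_ofReal hy
  _ = ENNReal.ofReal (∫ y, ((1 - X y) + X y * Real.exp c) ∂ν) := by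
        rw [ofReal_integral_eq_lintegral_ofReal hint]
        filter_upwards [hXb] with y hy
        show (0:ℝ) ≤ 1 - X y + X y * Real.exp c
        have : (0:ℝ) ≤ 1 - X y := by linarith [hy.2]
        have h2 : (0:ℝ) ≤ X y * Real.exp c := mul_nonneg hy.1 (Real.exp_pos c).le
        linarith
  _ = ENNReal.ofReal (1 - μstar + μstar * Real.exp c) := by
        have hrw : (fun y => 1 - X y + X y * Real.exp c)
            = fun y => (1:ℝ) + X y * (Real.exp c - 1) := funext fun y => by ring
        rw [hrw, integral_add (integrable_const 1) (hXi.mul_const _), integral_mul_const,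
          hXmean, integral_const]
        have : (1:ℝ) + μstar * (Real.exp c - 1) = 1 - μstar + μstar * Real.exp c := by ring
        simp [this]
  _ ≤ ENNReal.ofReal (Real.exp (c * μstar + c^2/8)) :=
        ENNReal.ofReal_le_ofReal (lap_bern_hoeffding hμ0 hμ1 hc)

end kernelHelpers


/-- Laplace mechanism supermartingale: with `Z_t = X_t + L_t`, where `X_t ∈ [0,1]` has
conditional mean `μ*` given the past, `L_t` is conditionally mean-zero Laplace with scale
`1/ε_t` (conditional mgf `c ↦ 1/(1 - c²/ε_t²)` for `|c| < ε_t`), conditionally independent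
of `X_t`, and `λ_t ∈ [0, ε_t)` predictable, the process
`M_t = ∏_{i=1}^t exp{λ_i (Z_i − μ*) − λ_i²/8 − ψ_i(λ_i)}` with `ψ_i(λ) = −log(1 − λ²/ε_i²)`
is a nonnegative supermartingale starting at one. -/
theorem laplace_mechanism_supermartingale
    {Ω : Type*} [m0 : MeasurableSpace Ω] [StandardBorelSpace Ω]
    (μ : Measure Ω) [IsProbabilityMeasure μ]
    (𝒵 : Filtration ℕ m0) (X L Z : ℕ → Ω → ℝ) (hZ : Adapted 𝒵 Z)
    (ε : ℕ → ℝ) (hε : ∀ t, 0 < ε t)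
    (l : ℕ → Ω → ℝ) (μstar : ℝ) (hμstar : μstar ∈ Set.Icc (0 : ℝ) 1)
    (hZdef : ∀ t ω, Z t ω = X t ω + L t ω)
    (hXbdd : ∀ t, ∀ᵐ ω ∂μ, X t ω ∈ Set.Icc (0 : ℝ) 1)
    (hXint : ∀ t, Integrable (X t) μ)
    (hXmean : ∀ t, 1 ≤ t → μ[X t|𝒵 (t - 1)] =ᵐ[μ] fun _ => μstar)
    (hLmgf : ∀ t, 1 ≤ t → ∀ c : ℝ, |c| < ε t →
      μ[fun ω => Real.exp (c * L t ω)|𝒵 (t - 1)] =ᵐ[μ]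
        fun _ => 1 / (1 - c ^ 2 / (ε t) ^ 2))
    (hcondindep : ∀ t, 1 ≤ t → CondIndepFun (𝒵 (t - 1)) (𝒵.le (t - 1)) (X t) (L t) μ)
    (hlpred : ∀ t, 1 ≤ t → Measurable[𝒵 (t - 1)] (l t))
    (hlval : ∀ t ω, l t ω ∈ Set.Ico (0 : ℝ) (ε t))
    (M : ℕ → Ω → ℝ)
    (hM : ∀ t ω, M t ω = ∏ i ∈ Finset.Icc 1 t,
      Real.exp (l i ω * (Z i ω - μstar) - (l i ω) ^ 2 / 8
        + Real.log (1 - (l i ω) ^ 2 / (ε i) ^ 2))) :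
    Supermartingale M 𝒵 μ ∧ (∀ ω, M 0 ω = 1) ∧ ∀ t ω, 0 ≤ M t ω := by
  classical
  have hMeq : ∀ t, M t = fun ω => ∏ i ∈ Finset.Icc 1 t,
      Real.exp (l i ω * (Z i ω - μstar) - (l i ω) ^ 2 / 8
        + Real.log (1 - (l i ω) ^ 2 / (ε i) ^ 2)) := fun t => funext (hM t)
  have hMmeasAt : ∀ t, Measurable[𝒵 t] (M t) := by
    intro t
    rw [hMeq t]
    apply Finset.measurable_prod
    intro i hi
    rw [Finset.mem_Icc] at hi
    have hl : Measurable[𝒵 t] (l i) :=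
      (hlpred i hi.1).mono (𝒵.mono (by omega : i - 1 ≤ t)) le_rfl
    have hz : Measurable[𝒵 t] (Z i) := (hZ i).mono (𝒵.mono hi.2) le_rfl
    exact Real.measurable_exp.comp
      (((hl.mul (hz.sub measurable_const)).sub ((hl.pow_const 2).div_const 8)).add
        (Real.measurable_log.comp (measurable_const.sub ((hl.pow_const 2).div_const _))))
  have hMnn : ∀ t ω, 0 ≤ M t ω := fun t ω => by
    rw [hM]; exact Finset.prod_nonneg fun i _ => (Real.exp_pos _).le
  have hM0 : ∀ ω, M 0 ω = 1 := fun ω => by rw [hM]; simp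
  have hMrec : ∀ t ω, M (t+1) ω = M t ω *
      Real.exp (l (t+1) ω * (Z (t+1) ω - μstar) - (l (t+1) ω)^2/8
        + Real.log (1 - (l (t+1) ω)^2/(ε (t+1))^2)) := by
    intro t ω
    rw [hM, hM]
    exact Finset.prod_Icc_succ_top (Nat.le_add_left 1 t) _
  -- KEY one-step bound at the kernel level
  have key : ∀ t, ∀ᵐ ω ∂μ,
      ∫⁻ y, ENNReal.ofReal (M (t+1) y) ∂(condExpKernel μ (𝒵 t) ω)
        ≤ ENNReal.ofReal (M t ω) := by
    intro t
    have hm : 𝒵 t ≤ m0 := 𝒵.le t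
    have ht1 : 1 ≤ t + 1 := Nat.le_add_left 1 t
    have hεt : 0 < ε (t+1) := hε (t+1)
    obtain ⟨X', hX'm, hX'e⟩ : ∃ X' : Ω → ℝ, Measurable X' ∧ X (t+1) =ᵐ[μ] X' := by
      have h := (hXint (t+1)).aemeasurable
      exact ⟨h.mk _, h.measurable_mk, h.ae_eq_mk⟩
    set L' : Ω → ℝ := fun y => Z (t+1) y - X' y with hL'def
    have hL'm : Measurable L' := ((hZ (t+1)).mono (𝒵.le _) le_rfl).sub hX'm
    have hL'e : L (t+1) =ᵐ[μ] L' := by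
      filter_upwards [hX'e] with y hy
      show L (t+1) y = Z (t+1) y - X' y
      rw [hZdef (t+1) y, ← hy]
      ring
    have hX'int : Integrable X' μ := (hXint (t+1)).congr hX'e
    have F1 := lap_kernel_const (μ := μ) hm (hMmeasAt t)
    have hlm : Measurable[𝒵 t] (l (t+1)) := hlpred (t+1) ht1
    have F2 := lap_kernel_const (μ := μ) hm hlm
    have hX'bdd : ∀ᵐ y ∂μ, X' y ∈ Set.Icc (0:ℝ) 1 := by
      filter_upwards [hXbdd (t+1), hX'e] with y hy1 hy2
      rwa [← hy2]
    have F3 := lap_ae_kernel (μ := μ) hm hX'bdd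
    have hcondX : μ[X'|𝒵 t] =ᵐ[μ] fun _ => μstar :=
      (condExp_congr_ae (m := 𝒵 t) hX'e.symm).trans (hXmean (t+1) ht1)
    have F4a := hX'int.condExpKernel_ae (m := 𝒵 t)
    have F4b := condExp_ae_eq_integral_condExpKernel hm hX'int
    have F4 : ∀ᵐ ω ∂μ, ∫ y, X' y ∂(condExpKernel μ (𝒵 t) ω) = μstar := by
      filter_upwards [F4b, hcondX] with ω hω1 hω2
      rw [← hω1, hω2]
    have F5 : ∀ᵐ ω ∂μ, ∀ q : ℚ, 0 < (q:ℝ) → (q:ℝ) < ε (t+1) →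
        ∫⁻ y, ENNReal.ofReal (Real.exp ((q:ℝ) * L' y)) ∂(condExpKernel μ (𝒵 t) ω)
          = ENNReal.ofReal (1 / (1 - (q:ℝ)^2 / (ε (t+1))^2)) := by
      rw [ae_all_iff]
      intro q
      by_cases hq0 : 0 < (q:ℝ)
      swap
      · exact Filter.Eventually.of_forall fun ω h => absurd h hq0
      by_cases hqε : (q:ℝ) < ε (t+1)
      swap
      · exact Filter.Eventually.of_forall fun ω _ h => absurd h hqε
      have habs : |(q:ℝ)| < ε (t+1) := by rwa [abs_of_pos hq0]
      have hmgf := hLmgf (t+1) ht1 q habs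
      have hden : (0:ℝ) < 1 - (q:ℝ)^2/(ε (t+1))^2 := by
        have h1 : (q:ℝ)^2 < (ε (t+1))^2 := by nlinarith
        have h2 : (q:ℝ)^2/(ε (t+1))^2 < 1 := (div_lt_one (by positivity)).2 h1
        linarith
      have hpos : (0:ℝ) < 1 / (1 - (q:ℝ)^2/(ε (t+1))^2) := by positivity
      have hintL : Integrable (fun y => Real.exp ((q:ℝ) * L (t+1) y)) μ := by
        by_contra hni
        rw [condExp_of_not_integrable hni] at hmgf
        obtain ⟨y, hy⟩ := hmgf.exists
        simp only [Pi.zero_apply] at hy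
        exact absurd hy.symm (ne_of_gt hpos)
      have heae : (fun y => Real.exp ((q:ℝ) * L (t+1) y))
          =ᵐ[μ] fun y => Real.exp ((q:ℝ) * L' y) :=
        hL'e.mono fun y hy => by
          show Real.exp ((q:ℝ) * L (t+1) y) = Real.exp ((q:ℝ) * L' y)
          rw [hy]
      have hintL' : Integrable (fun y => Real.exp ((q:ℝ) * L' y)) μ := hintL.congr heae
      have hκint := hintL'.condExpKernel_ae (m := 𝒵 t)
      have hcond := condExp_ae_eq_integral_condExpKernel hm hintL'
      have hcond2 : μ[(fun y => Real.exp ((q:ℝ) * L' y))|𝒵 t]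
          =ᵐ[μ] fun _ => 1 / (1 - (q:ℝ)^2/(ε (t+1))^2) :=
        (condExp_congr_ae (m := 𝒵 t) heae).symm.trans hmgf
      filter_upwards [hκint, hcond, hcond2] with ω hω1 hω2 hω3 _ _
      rw [← ofReal_integral_eq_lintegral_ofReal hω1
        (Filter.Eventually.of_forall fun y => (Real.exp_pos _).le), ← hω2, hω3]
    have F6 := lap_condIndep (μ := μ) hm hX'm hL'm hX'e hL'e (hcondindep (t+1) ht1)
    filter_upwards [F1, F2, F3, F4a, F4, F5, F6] with ω h1 h2 h3 h4a h4 h5 h6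
    have hc0 : 0 ≤ l (t+1) ω := (hlval (t+1) ω).1
    have hcε : l (t+1) ω < ε (t+1) := (hlval (t+1) ω).2
    set c := l (t+1) ω with hcdef
    have hden : (0:ℝ) < 1 - c^2/(ε (t+1))^2 := by
      have ha : c^2 < (ε (t+1))^2 := by nlinarith
      have hb : c^2/(ε (t+1))^2 < 1 := (div_lt_one (by positivity)).2 ha
      linarith
    set K : ℝ := Real.exp (-(c*μstar) - c^2/8) * (1 - c^2/(ε (t+1))^2) with hKdef
    have hK0 : 0 ≤ K := mul_nonneg (Real.exp_pos _).le hden.le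
    have hinteg : ∀ᵐ y ∂(condExpKernel μ (𝒵 t) ω), ENNReal.ofReal (M (t+1) y)
        = (ENNReal.ofReal (M t ω) * ENNReal.ofReal K)
          * (ENNReal.ofReal (Real.exp (c * X' y)) * ENNReal.ofReal (Real.exp (c * L' y))) := by
      filter_upwards [h1, h2, h3] with y hy1 hy2 hy3
      have hzy : Z (t+1) y = X' y + L' y := by show _ = _ + (Z (t+1) y - X' y); ring
      have hreal : M (t+1) y = (M t ω * K) * (Real.exp (c * X' y) * Real.exp (c * L' y)) := by
        rw [hMrec t y, hy1, hy2, hzy, hKdef]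
        have hcomb : Real.exp (-(c*μstar) - c^2/8) * (Real.exp (c * X' y) * Real.exp (c * L' y))
            = Real.exp (c * (X' y + L' y - μstar) - c^2/8) := by
          rw [← Real.exp_add, ← Real.exp_add]
          congr 1
          ring
        rw [Real.exp_add, Real.exp_log hden, ← hcomb]
        ring
      rw [hreal, ENNReal.ofReal_mul (mul_nonneg (hMnn t ω) hK0),
        ENNReal.ofReal_mul (hMnn t ω),
        ENNReal.ofReal_mul (p := Real.exp (c * X' y)) (Real.exp_pos _).le]
    have hfm : Measurable (fun y => ENNReal.ofReal (Real.exp (c * X' y))) :=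
      ENNReal.measurable_ofReal.comp (Real.measurable_exp.comp (hX'm.const_mul c))
    have hgm : Measurable (fun y => ENNReal.ofReal (Real.exp (c * L' y))) :=
      ENNReal.measurable_ofReal.comp (Real.measurable_exp.comp (hL'm.const_mul c))
    have hindep : IndepFun (fun y => ENNReal.ofReal (Real.exp (c * X' y)))
        (fun y => ENNReal.ofReal (Real.exp (c * L' y))) (condExpKernel μ (𝒵 t) ω) :=
      h6.comp (ENNReal.measurable_ofReal.comp (Real.measurable_exp.comp (measurable_const_mul c)))
        (ENNReal.measurable_ofReal.comp (Real.measurable_exp.comp (measurable_const_mul c)))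
    set S := ∫⁻ y, ENNReal.ofReal (Real.exp (c * X' y)) ∂(condExpKernel μ (𝒵 t) ω) with hSdef
    set T := ∫⁻ y, ENNReal.ofReal (Real.exp (c * L' y)) ∂(condExpKernel μ (𝒵 t) ω) with hTdef
    have h7 : ∫⁻ y, ENNReal.ofReal (M (t+1) y) ∂(condExpKernel μ (𝒵 t) ω)
        = ENNReal.ofReal (M t ω) * ENNReal.ofReal K * (S * T) := by
      rw [lintegral_congr_ae hinteg,
        lintegral_const_mul (ENNReal.ofReal (M t ω) * ENNReal.ofReal K) (hfm.mul hgm)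
          (f := fun y => ENNReal.ofReal (Real.exp (c * X' y)) * ENNReal.ofReal (Real.exp (c * L' y))),
        lintegral_mul_eq_lintegral_mul_lintegral_of_indepFun'' hfm.aemeasurable
          hgm.aemeasurable hindep]
    rw [h7]
    have hS : S ≤ ENNReal.ofReal (Real.exp (c * μstar + c^2/8)) :=
      lap_x_bound h4a h3 h4 hc0 hμstar.1 hμstar.2
    have hT : ENNReal.ofReal (1 - c^2/(ε (t+1))^2) * T ≤ 1 :=
      lap_mgf_bound hL'm hc0 hcε hεt h5
    have hSb : ENNReal.ofReal (Real.exp (-(c*μstar) - c^2/8)) * S ≤ 1 := by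
      calc ENNReal.ofReal (Real.exp (-(c*μstar) - c^2/8)) * S
          ≤ ENNReal.ofReal (Real.exp (-(c*μstar) - c^2/8))
            * ENNReal.ofReal (Real.exp (c * μstar + c^2/8)) := mul_le_mul_right hS _
      _ = ENNReal.ofReal (Real.exp (-(c*μstar) - c^2/8) * Real.exp (c * μstar + c^2/8)) :=
            (ENNReal.ofReal_mul (Real.exp_pos _).le).symm
      _ = 1 := by
            rw [← Real.exp_add]
            have : -(c*μstar) - c^2/8 + (c * μstar + c^2/8) = 0 := by ring
            rw [this, Real.exp_zero, ENNReal.ofReal_one]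
    calc ENNReal.ofReal (M t ω) * ENNReal.ofReal K * (S * T)
        = ENNReal.ofReal (M t ω) * ((ENNReal.ofReal (Real.exp (-(c*μstar) - c^2/8)) * S)
            * (ENNReal.ofReal (1 - c^2/(ε (t+1))^2) * T)) := by
          rw [hKdef, ENNReal.ofReal_mul (Real.exp_pos _).le]
          ring
    _ ≤ ENNReal.ofReal (M t ω) * (1 * 1) :=
          mul_le_mul_right (mul_le_mul' hSb hT) _
    _ = ENNReal.ofReal (M t ω) := by rw [mul_one, mul_one]
  -- Integrability by induction
  have hMint : ∀ t, Integrable (M t) μ := by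
    intro t
    induction t with
    | zero =>
      have h : M 0 = fun _ => (1:ℝ) := funext hM0
      rw [h]
      exact integrable_const 1
    | succ t ih =>
      have hmeas : Measurable (M (t+1)) := (hMmeasAt (t+1)).mono (𝒵.le _) le_rfl
      have hbnd : ∀ n : ℕ, ∫⁻ y, ENNReal.ofReal (min (M (t+1) y) n) ∂μ
          ≤ ENNReal.ofReal (∫ y, M t y ∂μ) := by
        intro n
        have hnn' : ∀ y, 0 ≤ min (M (t+1) y) (n:ℝ) :=
          fun y => le_min (hMnn (t+1) y) (Nat.cast_nonneg n)
        have hnint : Integrable (fun y => min (M (t+1) y) n) μ := by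
          refine ⟨(hmeas.min measurable_const).aestronglyMeasurable, ?_⟩
          apply HasFiniteIntegral.of_bounded (C := (n:ℝ))
          refine Filter.Eventually.of_forall fun y => ?_
          rw [Real.norm_eq_abs, abs_le]
          exact ⟨by linarith [hnn' y], min_le_right _ _⟩
        have hcond := condExp_ae_eq_integral_condExpKernel (𝒵.le t) hnint
        have hκint := hnint.condExpKernel_ae (m := 𝒵 t)
        have hle : μ[(fun y => min (M (t+1) y) n)|𝒵 t] ≤ᵐ[μ] M t := by
          filter_upwards [hcond, hκint, key t] with ω hω1 hω2 hω3
          rw [hω1]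
          have heq := ofReal_integral_eq_lintegral_ofReal hω2
            (Filter.Eventually.of_forall hnn')
          have hle2 : ∫⁻ y, ENNReal.ofReal (min (M (t+1) y) n) ∂(condExpKernel μ (𝒵 t) ω)
              ≤ ENNReal.ofReal (M t ω) :=
            le_trans (lintegral_mono fun y => ENNReal.ofReal_le_ofReal (min_le_left _ _)) hω3
          exact (ENNReal.ofReal_le_ofReal_iff (hMnn t ω)).1 (heq.le.trans hle2)
        calc ∫⁻ y, ENNReal.ofReal (min (M (t+1) y) n) ∂μ
            = ENNReal.ofReal (∫ y, min (M (t+1) y) n ∂μ) :=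
              (ofReal_integral_eq_lintegral_ofReal hnint
                (Filter.Eventually.of_forall hnn')).symm
        _ ≤ ENNReal.ofReal (∫ y, M t y ∂μ) := by
              apply ENNReal.ofReal_le_ofReal
              rw [← integral_condExp (𝒵.le t) (f := fun y => min (M (t+1) y) n)]
              exact integral_mono_ae integrable_condExp ih hle
      have hpt : ∀ y, ENNReal.ofReal (M (t+1) y)
          = ⨆ n : ℕ, ENNReal.ofReal (min (M (t+1) y) n) := by
        intro y
        apply le_antisymm
        · refine le_iSup_of_le ⌈M (t+1) y⌉₊ ?_
          rw [min_eq_left (Nat.le_ceil _)]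
        · exact iSup_le fun n => ENNReal.ofReal_le_ofReal (min_le_left _ _)
      have hmeasn : ∀ n : ℕ, Measurable (fun y => ENNReal.ofReal (min (M (t+1) y) (n:ℝ))) :=
        fun n => ENNReal.measurable_ofReal.comp (hmeas.min measurable_const)
      have hmono : Monotone (fun (n:ℕ) (y:Ω) => ENNReal.ofReal (min (M (t+1) y) (n:ℝ))) :=
        fun i j hij y => ENNReal.ofReal_le_ofReal
          (min_le_min le_rfl (Nat.cast_le.2 hij))
      have hsup : ∫⁻ y, ENNReal.ofReal (M (t+1) y) ∂μ
          = ⨆ n : ℕ, ∫⁻ y, ENNReal.ofReal (min (M (t+1) y) n) ∂μ := by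
        calc ∫⁻ y, ENNReal.ofReal (M (t+1) y) ∂μ
            = ∫⁻ y, ⨆ n : ℕ, ENNReal.ofReal (min (M (t+1) y) (n:ℝ)) ∂μ :=
              lintegral_congr hpt
        _ = ⨆ n : ℕ, ∫⁻ y, ENNReal.ofReal (min (M (t+1) y) n) ∂μ :=
              lintegral_iSup hmeasn hmono
      refine ⟨hmeas.aestronglyMeasurable, ?_⟩
      rw [hasFiniteIntegral_iff_ofReal (Filter.Eventually.of_forall (hMnn (t+1)))]
      rw [hsup]
      exact lt_of_le_of_lt (iSup_le fun n => hbnd n) ENNReal.ofReal_lt_top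
  -- Supermartingale property
  have hstep : ∀ n, μ[M (n+1)|𝒵 n] ≤ᵐ[μ] M n := by
    intro n
    have hcond := condExp_ae_eq_integral_condExpKernel (𝒵.le n) (hMint (n+1))
    have hκint := (hMint (n+1)).condExpKernel_ae (m := 𝒵 n)
    filter_upwards [hcond, hκint, key n] with ω hω1 hω2 hω3
    rw [hω1]
    have heq := ofReal_integral_eq_lintegral_ofReal hω2
      (Filter.Eventually.of_forall fun y => hMnn (n+1) y)
    exact (ENNReal.ofReal_le_ofReal_iff (hMnn n ω)).1 (heq.le.trans hω3)
  exact ⟨supermartingale_nat (fun t => (hMmeasAt t).stronglyMeasurable) hMint hstep,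
    hM0, hMnn⟩
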